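/- Let q = p^e be a prime power and let F_q be the finite field with q elements. For every ring automorphism φ of the matrix ring M_2(F_q) there exist an invertible matrix T ∈ GL_2(F_q) and a field automorphism σ of F_q such that φ(X) = T^{−1}·σ(X)·T for all X ∈ M_2(F_q), where σ(X) denotes the matrix obtained by applying σ to each entry of X. -/

import Mathlib

open Matrix


/-- **Skolem–Noether for `M₂(F_q)`.** Every ring automorphism `φ` of
the ring of `2 × 2` matrices over a finite field `K` of order `q = p^e` has the form
`φ(X) = T⁻¹ · σ(X) · T` for some invertible matrix `T` and field automorphism `σ`
of `K` (applied entrywise). -/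
theorem ringAut_matrix_two_eq_conj_fieldAut
    (p e : ℕ) (hp : p.Prime) (he : 0 < e)
    (K : Type) [Field K] [Fintype K] (hK : Fintype.card K = p ^ e)
    (φ : Matrix (Fin 2) (Fin 2) K ≃+* Matrix (Fin 2) (Fin 2) K) :
    ∃ (T : GL (Fin 2) K) (σ : K ≃+* K),
      ∀ X : Matrix (Fin 2) (Fin 2) K,
        φ X = (↑T⁻¹ : Matrix (Fin 2) (Fin 2) K) * X.map σ *
          (↑T : Matrix (Fin 2) (Fin 2) K) := by
  classical
  -- Step 1: φ sends scalar matrices to scalar matrices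
  have hcent : ∀ c : K, ∃ d : K, φ (scalar (Fin 2) c) = scalar (Fin 2) d := by
    intro c
    have hmem : φ (scalar (Fin 2) c) ∈ Set.range (Matrix.scalar (Fin 2)) := by
      apply mem_range_scalar_of_commute_single
      intro i j _
      have h1 : Matrix.single i j 1 = φ (φ.symm (Matrix.single i j (1 : K))) :=
        (φ.apply_symm_apply _).symm
      rw [Commute, SemiconjBy, h1, ← _root_.map_mul, ← _root_.map_mul]
      exact congrArg φ
        ((scalar_commute c (fun r' => mul_comm c r') (φ.symm (Matrix.single i j 1))).eq.symm)
    obtain ⟨d, hd⟩ := hmem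
    exact ⟨d, hd.symm⟩
  choose s hs using hcent
  -- s is a ring hom
  have hinj : ∀ a b : K, scalar (Fin 2) a = scalar (Fin 2) b → a = b := fun a b h =>
    scalar_inj.mp h
  have hs1 : s 1 = 1 := by
    apply hinj
    rw [← hs, _root_.map_one, _root_.map_one]
  have hsadd : ∀ a b : K, s (a + b) = s a + s b := by
    intro a b
    apply hinj
    rw [← hs, _root_.map_add, _root_.map_add, _root_.map_add, hs, hs]
  have hsmul : ∀ a b : K, s (a * b) = s a * s b := by
    intro a b
    apply hinj
    rw [← hs, _root_.map_mul, _root_.map_mul, _root_.map_mul, hs, hs]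
  let σ₀ : K →+* K :=
    { toFun := s, map_one' := hs1, map_mul' := hsmul,
      map_zero' := by
        apply hinj; rw [← hs, _root_.map_zero, _root_.map_zero]
      map_add' := hsadd }
  have hbij : Function.Bijective σ₀ := Finite.injective_iff_bijective.mp σ₀.injective
  let σ : K ≃+* K := RingEquiv.ofBijective σ₀ hbij
  have hσ : ∀ c : K, φ (scalar (Fin 2) c) = scalar (Fin 2) (σ c) := hs
  -- Step 2: the K-algebra automorphism ψ
  let ψ : Matrix (Fin 2) (Fin 2) K ≃+* Matrix (Fin 2) (Fin 2) K :=
    (RingEquiv.mapMatrix σ.symm).trans φ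
  have hψ : ∀ X, ψ X = φ (X.map ⇑σ.symm) := fun X => rfl
  have hscm : ∀ (c : K), (scalar (Fin 2) c).map ⇑σ.symm = scalar (Fin 2) (σ.symm c) := by
    intro c
    rw [scalar_apply, scalar_apply, diagonal_map (_root_.map_zero σ.symm)]
  have hψsc : ∀ c : K, ψ (scalar (Fin 2) c) = scalar (Fin 2) c := by
    intro c
    rw [hψ, hscm, hσ, RingEquiv.apply_symm_apply]
  have hscmul : ∀ (c : K) (X : Matrix (Fin 2) (Fin 2) K), scalar (Fin 2) c * X = c • X := by
    intro c X
    ext i j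
    rw [scalar_apply, diagonal_mul, Matrix.smul_apply, smul_eq_mul]
  have hlin : ∀ (c : K) (X), ψ (c • X) = c • ψ X := by
    intro c X
    rw [← hscmul, _root_.map_mul, hψsc, hscmul]
  -- Step 3: matrix units and the intertwiner
  set E : Fin 2 → Fin 2 → Matrix (Fin 2) (Fin 2) K := fun i j => Matrix.single i j 1 with hE
  -- a nonzero vector in the image of ψ (E 0 0)
  have hA00 : ψ (E 0 0) ≠ 0 := by
    intro h
    have h2 : E 0 0 = 0 := ψ.injective (by rw [h, _root_.map_zero])
    have := congrFun (congrFun h2 0) 0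
    simp [hE, Matrix.single] at this
  obtain ⟨i₀, j₀, h₀⟩ : ∃ i j, ψ (E 0 0) i j ≠ 0 := by
    by_contra hc
    push_neg at hc
    exact hA00 (Matrix.ext fun i j => hc i j)
  set u : Fin 2 → K := Pi.single j₀ 1 with hu
  set col : Fin 2 → Fin 2 → K := fun j => (ψ (E j 0)).mulVec u with hcol
  have hv₀ : col 0 i₀ ≠ 0 := by
    simpa [hcol, hu, mulVec_single] using h₀
  -- multiplication rules
  have hAv : ∀ k l j : Fin 2, (ψ (E k l)).mulVec (col j) =
      if l = j then col k else 0 := by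
    intro k l j
    simp only [hcol, hE]
    rw [mulVec_mulVec, ← _root_.map_mul]
    by_cases h : l = j
    · subst h
      rw [single_mul_single_same, mul_one, if_pos rfl]
    · rw [single_mul_single_of_ne (h := h), _root_.map_zero, zero_mulVec, if_neg h]
  set S : Matrix (Fin 2) (Fin 2) K := Matrix.of fun i j => col j i with hS
  have hScol : ∀ j : Fin 2, S.mulVec (Pi.single j 1) = col j := by
    intro j
    ext i
    simp [hS, mulVec_single]
  have hcolapp : ∀ (M : Matrix (Fin 2) (Fin 2) K) (i j : Fin 2),
      M.mulVec (Pi.single j 1) i = M i j := by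
    intro M i j
    simp [mulVec_single]
  -- the key intertwining relation on basis matrices
  have key : ∀ k l : Fin 2, ψ (E k l) * S = S * E k l := by
    intro k l
    ext i j
    rw [← hcolapp (ψ (E k l) * S) i j, ← hcolapp (S * E k l) i j]
    rw [← mulVec_mulVec, ← mulVec_mulVec, hScol]
    have hEv : (E k l).mulVec (Pi.single j (1 : K)) =
        if l = j then Pi.single k 1 else 0 := by
      simp only [hE]
      rw [mulVec_single]
      ext i'
      by_cases h : l = j
      · subst h
        simp [Matrix.single, Pi.single_apply, eq_comm]
      · simp [Matrix.single, Pi.single_apply, h, Ne.symm h]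
    rw [hEv, hAv]
    by_cases h : l = j
    · simp [h, hS]
    · simp [h]
  -- extend to all matrices by linearity
  have keyall : ∀ X : Matrix (Fin 2) (Fin 2) K, ψ X * S = S * X := by
    intro X
    have hX : X = ∑ i : Fin 2, ∑ j : Fin 2, X i j • E i j := by
      simp only [hE, smul_single, smul_eq_mul, mul_one]
      exact matrix_eq_sum_single X
    rw [hX]
    simp only [_root_.map_sum, hlin, Finset.sum_mul, Finset.mul_sum, smul_mul_assoc,
      mul_smul_comm, key]
  -- S is invertible
  have hSinj : Function.Injective S.mulVec := by
    have hker : ∀ x : Fin 2 → K, S.mulVec x = 0 → x = 0 := by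
      intro x hx
      have hj : ∀ j : Fin 2, x j = 0 := by
        intro j
        have h1 : (ψ (E 0 j)).mulVec (S.mulVec x) = 0 := by rw [hx, mulVec_zero]
        rw [mulVec_mulVec, key 0 j, ← mulVec_mulVec] at h1
        have h2 : (E 0 j).mulVec x = Pi.single 0 (x j) := by
          rw [hE]
          ext i'
          simp [Matrix.single, mulVec, dotProduct, Fin.sum_univ_two, Pi.single_apply]
          fin_cases i' <;> fin_cases j <;> simp
        rw [h2, mulVec_single] at h1
        have h4 := congrFun h1 i₀
        simp only [hS, of_apply, Pi.zero_apply] at h4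
        rcases mul_eq_zero.mp h4 with h4 | h4
        · exact absurd h4 hv₀
        · exact h4
      ext j; exact hj j
    intro x y hxy
    have hsub : S.mulVec (x - y) = 0 := by
      rw [mulVec_sub, hxy, sub_self]
    exact sub_eq_zero.mp (hker _ hsub)
  have hU : IsUnit S := mulVec_injective_iff_isUnit.mp hSinj
  refine ⟨hU.unit⁻¹, σ, ?_⟩
  intro X
  have h1 : ψ (X.map ⇑σ) = φ X := by
    rw [hψ, Matrix.map_map]
    congr 1
    ext i j
    simp
  have hcoe : (↑(hU.unit⁻¹)⁻¹ : Matrix (Fin 2) (Fin 2) K) = S := by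
    rw [inv_inv]
    exact hU.unit_spec
  calc φ X = ψ (X.map ⇑σ) * (↑hU.unit * ↑hU.unit⁻¹) := by
        rw [Units.mul_inv, mul_one, h1]
    _ = (ψ (X.map ⇑σ) * S) * ↑hU.unit⁻¹ := by rw [hU.unit_spec, mul_assoc]
    _ = S * X.map ⇑σ * ↑hU.unit⁻¹ := by rw [keyall]
    _ = (↑(hU.unit⁻¹)⁻¹ : Matrix (Fin 2) (Fin 2) K) * X.map ⇑σ * ↑(hU.unit⁻¹) := by
        rw [hcoe]
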